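/- Let s : ℝ → ℝ ∪ {−∞} (not identically −∞), let M be a set, for each u ∈ dom s = {v : s(v) > −∞} let I^u : M → [0,∞] with E^u = {m : I^u(m) = 0}, and assume the sets E^u, u ∈ dom s, are pairwise disjoint. For β ∈ ℝ with φ(β) = inf_v (β v − s(v)) finite, define I_β(m) = inf_{u ∈ dom s} (I^u(m) + J_β(u)) with J_β(u) = β u − s(u) − φ(β), E_β = {m : I_β(m) = 0}, and assume that for every m ∈ E_β the infimum defining I_β(m) is attained. If u₀ ∈ dom s is a nonconcave point of s, i.e., ∂s(u₀) = ∅ (s admits no supporting line at u₀), then E^{u₀} ∩ E_β = ∅ for every β ∈ ℝ with φ(β) finite (macrostate nonequivalence). -/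

import Mathlib

/-!
STATEMENT 9: Macrostate nonequivalence. With pairwise disjoint microcanonical equilibrium
sets `E^u = {I^u = 0}` (`u ∈ dom s`), canonical rate function
`I_β(m) = inf_{u ∈ dom s} (I^u(m) + J_β(u))` (for each `β` with `φ(β)` finite), and
attainment of the infimum on `E_β = {I_β = 0}`: if `u₀ ∈ dom s` is a nonconcave point of
`s` (`∂s(u₀) = ∅`, no supporting line), then `E^{u₀} ∩ E_β = ∅` for every `β` with
`φ(β)` finite.
-/

open scoped ENNReal

theorem macrostate_nonequivalence
    {M : Type*} (s : ℝ → EReal) (hs_top : ∀ v : ℝ, s v ≠ ⊤) (hne : ∃ v : ℝ, s v ≠ ⊥)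
    (Iu : ℝ → M → EReal)
    (hIu_nonneg : ∀ u : ℝ, s u ≠ ⊥ → ∀ m, 0 ≤ Iu u m)
    (hdisj : ∀ u v : ℝ, s u ≠ ⊥ → s v ≠ ⊥ → u ≠ v →
      {m | Iu u m = 0} ∩ {m | Iu v m = 0} = ∅)
    (Iβ : ℝ → M → EReal)
    (hIβ : ∀ β φβ : ℝ, (⨅ v : ℝ, ((β * v : ℝ) : EReal) - s v) = (φβ : EReal) →
      ∀ m, Iβ β m = ⨅ u ∈ {v : ℝ | s v ≠ ⊥},
        (Iu u m + (((β * u : ℝ) : EReal) - s u - (φβ : EReal))))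
    (hattain : ∀ β φβ : ℝ, (⨅ v : ℝ, ((β * v : ℝ) : EReal) - s v) = (φβ : EReal) →
      ∀ m, Iβ β m = 0 → ∃ u : ℝ, s u ≠ ⊥ ∧
        Iu u m + (((β * u : ℝ) : EReal) - s u - (φβ : EReal)) = Iβ β m)
    (u₀ : ℝ) (hu₀ : s u₀ ≠ ⊥)
    (hnc : ∀ β : ℝ, ¬ ∀ v : ℝ, s v ≤ s u₀ + ((β * (v - u₀) : ℝ) : EReal)) :
    ∀ β φβ : ℝ, (⨅ v : ℝ, ((β * v : ℝ) : EReal) - s v) = (φβ : EReal) →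
      {m | Iu u₀ m = 0} ∩ {m | Iβ β m = 0} = ∅ := by
  intro β φβ hφ
  ext m
  simp only [Set.mem_inter_iff, Set.mem_setOf_eq, Set.mem_empty_iff_false, iff_false, not_and]
  intro hm0 hmβ
  obtain ⟨u, hu, hsum⟩ := hattain β φβ hφ m hmβ
  rw [hmβ] at hsum
  -- s u is a real number
  have hru : ((s u).toReal : EReal) = s u := EReal.coe_toReal (hs_top u) hu
  set r : ℝ := (s u).toReal with hr
  have hφle : (φβ : EReal) ≤ ((β * u : ℝ) : EReal) - s u := by
    rw [← hφ]; exact iInf_le _ u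
  have hφler : φβ ≤ β * u - r := by
    rw [← hru] at hφle
    rw [← EReal.coe_sub] at hφle
    exact_mod_cast hφle
  set J : ℝ := β * u - r - φβ with hJ
  have hJ0 : 0 ≤ J := by simp [hJ]; linarith
  have hsum' : Iu u m + (J : EReal) = 0 := by
    rw [hJ]
    push_cast
    rw [hru]
    exact hsum
  have hIu0 : Iu u m = 0 := by
    have h1 : Iu u m ≤ Iu u m + (J : EReal) := by
      nth_rewrite 1 [← add_zero (Iu u m)]
      exact add_le_add (le_refl _) (by exact_mod_cast hJ0)
    rw [hsum'] at h1
    exact le_antisymm h1 (hIu_nonneg u hu m)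
  have hJz : (J : EReal) = 0 := by
    rw [hIu0, zero_add] at hsum'
    exact hsum'
  have hJz' : J = 0 := by exact_mod_cast hJz
  have huu₀ : u = u₀ := by
    by_contra hne'
    have := hdisj u u₀ hu hu₀ hne'
    have hmem : m ∈ {m | Iu u m = 0} ∩ {m | Iu u₀ m = 0} := ⟨hIu0, hm0⟩
    rw [this] at hmem
    exact hmem
  subst huu₀
  -- now φβ = β*u - r, contradict hnc
  have hφeq : φβ = β * u - r := by linarith [hJz']
  apply hnc β
  intro v
  by_cases hv : s v = ⊥
  · rw [hv]; exact bot_le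
  · have hrv : ((s v).toReal : EReal) = s v := EReal.coe_toReal (hs_top v) hv
    set rv : ℝ := (s v).toReal with hrv'
    have h1 : (φβ : EReal) ≤ ((β * v : ℝ) : EReal) - s v := by
      rw [← hφ]; exact iInf_le _ v
    rw [← hrv, ← EReal.coe_sub] at h1
    have h1' : φβ ≤ β * v - rv := by exact_mod_cast h1
    have h2 : rv ≤ r + β * (v - u) := by nlinarith [h1']
    calc s v = ((rv : ℝ) : EReal) := hrv.symm
      _ ≤ ((r + β * (v - u) : ℝ) : EReal) := by exact_mod_cast h2
      _ = s u + ((β * (v - u) : ℝ) : EReal) := by rw [← hru]; push_cast; ring_nf
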